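/- Let L be the weighted Laplacian of a connected undirected graph with positive weights and Λ = M B^T for a fixed matrix M. Then for all sufficiently small |κ|, the matrix L - κΛ has a simple zero eigenvalue with eigenvector 1_n, and all its other eigenvalues have positive real part. -/

import Mathlib

open Matrix Polynomial

noncomputable def inc (n e : ℕ) (tl hd : Fin e → Fin n) : Matrix (Fin n) (Fin e) ℝ :=
  Matrix.of fun i k => if i = tl k then 1 else if i = hd k then -1 else 0

def Conn (n e : ℕ) (tl hd : Fin e → Fin n) : Prop :=
  ∀ i j : Fin n, Relation.ReflTransGen
    (fun a b => ∃ k, (tl k = a ∧ hd k = b) ∨ (tl k = b ∧ hd k = a)) i j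

-- helper 4: eval of charpoly
lemma myEvalCharpoly {m : ℕ} (A : Matrix (Fin m) (Fin m) ℂ) (z : ℂ) :
    (A.charpoly).eval z = (z • (1 : Matrix (Fin m) (Fin m) ℂ) - A).det := by
  rw [Matrix.charpoly, ← coe_evalRingHom, RingHom.map_det]
  congr 1
  ext i j
  by_cases h : i = j
  · subst h; simp [charmatrix_apply_eq, Matrix.one_apply]
  · simp [charmatrix_apply_ne _ _ _ h, Matrix.one_apply, h]

-- helper 3: charpoly of diagonal
lemma myCharpolyDiag {m : ℕ} (d : Fin m → ℂ) :
    (Matrix.diagonal d).charpoly = ∏ i, (X - C (d i)) := by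
  have : charmatrix (Matrix.diagonal d) = Matrix.diagonal (fun i => (X : ℂ[X]) - C (d i)) := by
    ext i j
    by_cases h : i = j
    · subst h; simp [charmatrix_apply_eq]
    · simp [charmatrix_apply_ne _ _ _ h, Matrix.diagonal_apply_ne _ h]
  rw [Matrix.charpoly, this, Matrix.det_diagonal]

-- helper 2: conj invariance
lemma myCharpolyConj {m : ℕ} (U D V : Matrix (Fin m) (Fin m) ℂ)
    (hUV : U * V = 1) (hVU : V * U = 1) :
    (U * D * V).charpoly = D.charpoly := by
  unfold Matrix.charpoly
  have hmap : ∀ P Q : Matrix (Fin m) (Fin m) ℂ,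
      (P * Q).map (C : ℂ →+* ℂ[X]) = P.map C * Q.map C := fun P Q => Matrix.map_mul
  have h1 : charmatrix (U * D * V)
      = (U.map C) * charmatrix D * (V.map C) := by
    have hsc : (Matrix.scalar (Fin m)) (X : ℂ[X])
        = (X : ℂ[X]) • (1 : Matrix (Fin m) (Fin m) ℂ[X]) := by
      rw [Matrix.scalar_apply, smul_eq_diagonal_mul, mul_one]
    have hX : (U.map (C : ℂ →+* ℂ[X])) * ((X : ℂ[X]) • (1 : Matrix (Fin m) (Fin m) ℂ[X]))
        * (V.map C) = (X : ℂ[X]) • ((U.map C) * (V.map C)) := by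
      rw [Matrix.mul_smul, Matrix.smul_mul, mul_one]
    rw [charmatrix, charmatrix, RingHom.mapMatrix_apply, RingHom.mapMatrix_apply, hsc,
      Matrix.mul_sub, Matrix.sub_mul, hX, ← hmap, ← hmap, ← hmap, hUV]
    simp
  rw [h1, Matrix.det_mul, Matrix.det_mul]
  have h2 : (U.map (C : ℂ →+* ℂ[X])).det * (V.map C).det = 1 := by
    rw [← Matrix.det_mul, ← hmap, hUV]
    simp
  calc (U.map (C : ℂ →+* ℂ[X])).det * (charmatrix D).det * (V.map C).det
      = (U.map (C : ℂ →+* ℂ[X])).det * (V.map C).det * (charmatrix D).det := by ring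
    _ = (charmatrix D).det := by rw [h2, one_mul]

-- helper 1: Cauchy root bound for monic polynomials
lemma myRootBound (q : ℂ[X]) (hq : q.Monic) {z : ℂ} (hz : q.IsRoot z) :
    ‖z‖ ≤ max 1 (∑ i ∈ Finset.range q.natDegree, ‖q.coeff i‖) := by
  by_contra hcon
  push_neg at hcon
  have h1z : 1 < ‖z‖ := lt_of_le_of_lt (le_max_left _ _) hcon
  have hSz : (∑ i ∈ Finset.range q.natDegree, ‖q.coeff i‖) < ‖z‖ :=
    lt_of_le_of_lt (le_max_right _ _) hcon
  set d := q.natDegree with hd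
  have hd0 : d ≠ 0 := by
    intro h
    have : q = 1 := by
      have := Polynomial.Monic.natDegree_eq_zero hq |>.mp h
      exact this
    rw [this] at hz
    simp [Polynomial.IsRoot] at hz
  have heval : q.eval z = ∑ i ∈ Finset.range (d + 1), q.coeff i * z ^ i := by
    rw [hd]; exact q.eval_eq_sum_range z
  rw [Finset.sum_range_succ, hq.coeff_natDegree, one_mul] at heval
  have hzd : z ^ d = -∑ i ∈ Finset.range d, q.coeff i * z ^ i := by
    have := hz
    rw [Polynomial.IsRoot, heval] at this
    linear_combination this
  have hnorm : ‖z‖ ^ d ≤ ∑ i ∈ Finset.range d, ‖q.coeff i‖ * ‖z‖ ^ i := by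
    calc ‖z‖ ^ d = ‖z ^ d‖ := (norm_pow _ _).symm
      _ = ‖∑ i ∈ Finset.range d, q.coeff i * z ^ i‖ := by rw [hzd, norm_neg]
      _ ≤ ∑ i ∈ Finset.range d, ‖q.coeff i * z ^ i‖ := norm_sum_le _ _
      _ = ∑ i ∈ Finset.range d, ‖q.coeff i‖ * ‖z‖ ^ i := by
          simp [norm_mul, norm_pow]
  have hmono : ∀ i ∈ Finset.range d, ‖q.coeff i‖ * ‖z‖ ^ i ≤ ‖q.coeff i‖ * ‖z‖ ^ (d - 1) := by
    intro i hi
    have hi' : i ≤ d - 1 := Nat.le_pred_of_lt (Finset.mem_range.mp hi)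
    exact mul_le_mul_of_nonneg_left
      (pow_le_pow_right₀ (le_of_lt h1z) hi') (norm_nonneg _)
  have h2 : ‖z‖ ^ d ≤ (∑ i ∈ Finset.range d, ‖q.coeff i‖) * ‖z‖ ^ (d - 1) := by
    calc ‖z‖ ^ d ≤ ∑ i ∈ Finset.range d, ‖q.coeff i‖ * ‖z‖ ^ (d - 1) :=
          le_trans hnorm (Finset.sum_le_sum hmono)
      _ = (∑ i ∈ Finset.range d, ‖q.coeff i‖) * ‖z‖ ^ (d - 1) := by
          rw [Finset.sum_mul]
  have hzpos : (0:ℝ) < ‖z‖ ^ (d - 1) := pow_pos (lt_trans one_pos h1z) _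
  have h3 : ‖z‖ ^ d = ‖z‖ * ‖z‖ ^ (d - 1) := by
    rw [← pow_succ']
    congr 1
    omega
  rw [h3] at h2
  have := le_of_mul_le_mul_right h2 hzpos
  linarith

-- helper 5: continuity of charpoly coefficients
lemma myContCoeff {m : ℕ} (f : ℝ → Matrix (Fin m) (Fin m) ℂ)
    (hf : ∀ i j, Continuous fun κ => f κ i j) (i : ℕ) :
    Continuous fun κ => ((f κ).charpoly).coeff i := by
  classical
  set s : Finset ℂ := (Finset.range (m + 1)).image (Nat.cast : ℕ → ℂ) with hs
  have hinj : Set.InjOn (id : ℂ → ℂ) s := Function.injective_id.injOn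
  have hcard : s.card = m + 1 := by
    rw [hs, Finset.card_image_of_injective _ (Nat.cast_injective), Finset.card_range]
  have hdeg : ∀ κ, ((f κ).charpoly).degree < (s.card : ℕ) := by
    intro κ
    rw [hcard]
    exact lt_of_le_of_lt Polynomial.degree_le_natDegree
      (by exact_mod_cast Nat.lt_succ_of_le (le_of_eq ((f κ).charpoly_natDegree_eq_dim.trans
        (Fintype.card_fin m))))
  have key : ∀ κ, ((f κ).charpoly).coeff i
      = ∑ z ∈ s, ((z • (1 : Matrix (Fin m) (Fin m) ℂ) - f κ).det)
          * ((Lagrange.basis s id z).coeff i) := by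
    intro κ
    conv_lhs => rw [Lagrange.eq_interpolate hinj (hdeg κ)]
    rw [Lagrange.interpolate_apply, Polynomial.finset_sum_coeff]
    refine Finset.sum_congr rfl fun z hz => ?_
    rw [Polynomial.coeff_C_mul, myEvalCharpoly]
    simp
  simp only [key]
  refine continuous_finset_sum _ fun z _ => ?_
  refine Continuous.mul ?_ continuous_const
  refine Continuous.matrix_det ?_
  refine continuous_matrix fun a b => ?_
  exact Continuous.sub continuous_const (hf a b)

lemma mySumIte {R : Type*} [CommRing R] {n : ℕ} (a b : Fin n) (hab : a ≠ b) (g : Fin n → R) :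
    ∑ i, (if i = a then (1:R) else if i = b then -1 else 0) * g i = g a - g b := by
  have h : ∀ i : Fin n, (if i = a then (1:R) else if i = b then -1 else 0) * g i
      = (if i = a then g i else 0) + (if i = b then -g i else 0) := by
    intro i
    by_cases h1 : i = a
    · subst h1
      rw [if_pos rfl, if_pos rfl, if_neg hab, add_zero, one_mul]
    · by_cases h2 : i = b
      · subst h2
        rw [if_neg h1, if_pos rfl, if_neg h1, if_pos rfl, zero_add, neg_one_mul]
      · simp [h1, h2]
  simp only [h]
  rw [Finset.sum_add_distrib, Finset.sum_ite_eq' Finset.univ a g,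
    Finset.sum_ite_eq' Finset.univ b (fun i => -g i)]
  simp [sub_eq_add_neg]

lemma myIncRowR {n e : ℕ} (tl hd : Fin e → Fin n) (hloop : ∀ k, tl k ≠ hd k)
    (x : Fin n → ℝ) (k : Fin e) :
    ((inc n e tl hd)ᵀ *ᵥ x) k = x (tl k) - x (hd k) := by
  simp only [Matrix.mulVec, dotProduct, Matrix.transpose_apply, inc, Matrix.of_apply]
  exact mySumIte (tl k) (hd k) (hloop k) x

lemma myIncRowC {n e : ℕ} (tl hd : Fin e → Fin n) (hloop : ∀ k, tl k ≠ hd k)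
    (z : Fin n → ℂ) (k : Fin e) :
    (((inc n e tl hd).map Complex.ofReal)ᵀ *ᵥ z) k = z (tl k) - z (hd k) := by
  simp only [Matrix.mulVec, dotProduct, Matrix.transpose_apply, Matrix.map_apply, inc,
    Matrix.of_apply, apply_ite (Complex.ofReal), Complex.ofReal_one, Complex.ofReal_neg,
    Complex.ofReal_zero]
  exact mySumIte (tl k) (hd k) (hloop k) z

section Base
open scoped ComplexOrder
variable {n e : ℕ} (tl hd : Fin e → Fin n)

lemma myMapL (w : Fin e → ℝ) :
    ((inc n e tl hd * Matrix.diagonal w * (inc n e tl hd)ᵀ).map Complex.ofReal)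
      = (inc n e tl hd).map Complex.ofReal
        * Matrix.diagonal (fun k => (w k : ℂ))
        * ((inc n e tl hd).map Complex.ofReal)ᵀ := by
  have h1 : ∀ (P : Matrix (Fin n) (Fin e) ℝ) (Q : Matrix (Fin e) (Fin n) ℝ),
      (P * Q).map (Complex.ofRealHom : ℝ →+* ℂ) = P.map Complex.ofRealHom * Q.map Complex.ofRealHom :=
    fun P Q => Matrix.map_mul
  have h2 : ∀ (P : Matrix (Fin n) (Fin e) ℝ) (Q : Matrix (Fin e) (Fin e) ℝ),
      (P * Q).map (Complex.ofRealHom : ℝ →+* ℂ) = P.map Complex.ofRealHom * Q.map Complex.ofRealHom :=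
    fun P Q => Matrix.map_mul
  show ((inc n e tl hd * Matrix.diagonal w * (inc n e tl hd)ᵀ).map Complex.ofRealHom) = _
  rw [h1, h2, Matrix.diagonal_map (by simp)]
  rfl

lemma myQuad (hloop : ∀ k, tl k ≠ hd k) (w : Fin e → ℝ) (z : Fin n → ℂ) :
    dotProduct (star z)
        (((inc n e tl hd * Matrix.diagonal w * (inc n e tl hd)ᵀ).map Complex.ofReal) *ᵥ z)
      = ((∑ k, w k * Complex.normSq ((((inc n e tl hd).map Complex.ofReal)ᵀ *ᵥ z) k) : ℝ) : ℂ) := by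
  rw [myMapL tl hd w]
  rw [← Matrix.mulVec_mulVec, ← Matrix.mulVec_mulVec, Matrix.dotProduct_mulVec,
    ← Matrix.mulVec_transpose]
  have hstar : ((inc n e tl hd).map Complex.ofReal)ᵀ *ᵥ star z
      = star (((inc n e tl hd).map Complex.ofReal)ᵀ *ᵥ z) := by
    funext k
    rw [Pi.star_apply, myIncRowC tl hd hloop (star z) k, myIncRowC tl hd hloop z k]
    simp
  rw [hstar]
  simp only [dotProduct, Matrix.mulVec_diagonal, Pi.star_apply]
  push_cast
  refine Finset.sum_congr rfl fun k _ => ?_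
  set u := (((inc n e tl hd).map Complex.ofReal)ᵀ *ᵥ z) k with hu
  have h2 : star u * ((w k : ℂ) * u) = (w k : ℂ) * ((starRingEnd ℂ) u * u) := by
    rw [Complex.star_def]; ring
  rw [h2, ← Complex.normSq_eq_conj_mul_self]


lemma myKerConst (hn : 2 ≤ n) (hloop : ∀ k, tl k ≠ hd k) (hconn : Conn n e tl hd)
    (w : Fin e → ℝ) (hw : ∀ k, 0 < w k) (z : Fin n → ℂ)
    (hz : ((inc n e tl hd * Matrix.diagonal w * (inc n e tl hd)ᵀ).map Complex.ofReal) *ᵥ z = 0) :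
    ∃ c : ℂ, z = fun _ => c := by
  have hquad := myQuad tl hd hloop w z
  rw [hz, dotProduct_zero] at hquad
  have hsum : (∑ k, w k * Complex.normSq ((((inc n e tl hd).map Complex.ofReal)ᵀ *ᵥ z) k)) = 0 := by
    exact_mod_cast hquad.symm
  have hterm : ∀ k ∈ Finset.univ, w k * Complex.normSq ((((inc n e tl hd).map Complex.ofReal)ᵀ *ᵥ z) k) = 0 := by
    rw [← Finset.sum_eq_zero_iff_of_nonneg]
    · exact hsum
    · intro k _
      exact mul_nonneg (hw k).le (Complex.normSq_nonneg _)
  have hedge : ∀ k, z (tl k) = z (hd k) := by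
    intro k
    have h0 : Complex.normSq ((((inc n e tl hd).map Complex.ofReal)ᵀ *ᵥ z) k) = 0 := by
      have := hterm k (Finset.mem_univ k)
      rcases mul_eq_zero.mp this with h | h
      · exact absurd h (hw k).ne'
      · exact h
    have h1 : (((inc n e tl hd).map Complex.ofReal)ᵀ *ᵥ z) k = 0 := by
      exact Complex.normSq_eq_zero.mp h0
    rw [myIncRowC tl hd hloop z k] at h1
    exact sub_eq_zero.mp h1
  have hz2 : ∀ i j : Fin n, z i = z j := by
    intro i j
    induction hconn i j with
    | refl => rfl
    | tail _ hbc ih =>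
      obtain ⟨k, hk | hk⟩ := hbc
      · rw [ih, ← hk.1, ← hk.2]; exact hedge k
      · rw [ih, ← hk.1, ← hk.2]; exact (hedge k).symm
  refine ⟨z ⟨0, by omega⟩, funext fun i => hz2 i ⟨0, by omega⟩⟩

lemma myOneC (hloop : ∀ k, tl k ≠ hd k) (w : Fin e → ℝ) :
    ((inc n e tl hd * Matrix.diagonal w * (inc n e tl hd)ᵀ).map Complex.ofReal)
      *ᵥ (fun _ => (1:ℂ)) = 0 := by
  rw [myMapL tl hd w, ← Matrix.mulVec_mulVec, ← Matrix.mulVec_mulVec]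
  have h1 : ((inc n e tl hd).map Complex.ofReal)ᵀ *ᵥ (fun _ => (1:ℂ)) = 0 := by
    funext k
    rw [myIncRowC tl hd hloop _ k]
    simp
  rw [h1, Matrix.mulVec_zero, Matrix.mulVec_zero]

lemma myHerm (hloop : ∀ k, tl k ≠ hd k) (w : Fin e → ℝ) :
    ((inc n e tl hd * Matrix.diagonal w * (inc n e tl hd)ᵀ).map Complex.ofReal).IsHermitian := by
  have hLsymm : (inc n e tl hd * Matrix.diagonal w * (inc n e tl hd)ᵀ)ᵀ
      = inc n e tl hd * Matrix.diagonal w * (inc n e tl hd)ᵀ := by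
    rw [Matrix.transpose_mul, Matrix.transpose_mul, Matrix.transpose_transpose,
      Matrix.diagonal_transpose, Matrix.mul_assoc]
  show _ᴴ = _
  ext i j
  rw [Matrix.conjTranspose_apply, Matrix.map_apply, Matrix.map_apply, Complex.star_def,
    Complex.conj_ofReal]
  rw [show (inc n e tl hd * Matrix.diagonal w * (inc n e tl hd)ᵀ) j i
    = (inc n e tl hd * Matrix.diagonal w * (inc n e tl hd)ᵀ) i j from
      (congrFun (congrFun hLsymm j) i).symm.trans rfl]

lemma myPSD (hloop : ∀ k, tl k ≠ hd k) (w : Fin e → ℝ) (hw : ∀ k, 0 < w k) :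
    ((inc n e tl hd * Matrix.diagonal w * (inc n e tl hd)ᵀ).map Complex.ofReal).PosSemidef := by
  refine Matrix.PosSemidef.of_dotProduct_mulVec_nonneg (myHerm tl hd hloop w) fun x => ?_
  rw [myQuad tl hd hloop w x]
  rw [Complex.zero_le_real]
  exact Finset.sum_nonneg fun k _ => mul_nonneg (hw k).le (Complex.normSq_nonneg _)

lemma myBase (hn : 2 ≤ n) (hloop : ∀ k, tl k ≠ hd k) (hconn : Conn n e tl hd)
    (w : Fin e → ℝ) (hw : ∀ k, 0 < w k) :
    ∀ z : ℂ, z.re ≤ 0 →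
      (Polynomial.divX (Matrix.charpoly
        ((inc n e tl hd * Matrix.diagonal w * (inc n e tl hd)ᵀ).map Complex.ofReal))).eval z ≠ 0 := by
  classical
  have hH := myHerm tl hd hloop w
  have hPSD := myPSD tl hd hloop w hw
  set Lc := ((inc n e tl hd * Matrix.diagonal w * (inc n e tl hd)ᵀ).map Complex.ofReal) with hLc
  set eig := hH.eigenvalues with heig
  have hnn : ∀ i, 0 ≤ eig i := hPSD.eigenvalues_nonneg
  -- characteristic polynomial factorization
  have hcharp : Lc.charpoly = ∏ i, (Polynomial.X - Polynomial.C ((eig i : ℝ) : ℂ)) := by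
    have hU1 : (hH.eigenvectorUnitary : Matrix (Fin n) (Fin n) ℂ)
        * (star (hH.eigenvectorUnitary : Matrix (Fin n) (Fin n) ℂ)) = 1 :=
      (Matrix.mem_unitaryGroup_iff).mp (hH.eigenvectorUnitary).2
    have hU2 : (star (hH.eigenvectorUnitary : Matrix (Fin n) (Fin n) ℂ))
        * (hH.eigenvectorUnitary : Matrix (Fin n) (Fin n) ℂ) = 1 :=
      (Matrix.mem_unitaryGroup_iff').mp (hH.eigenvectorUnitary).2
    conv_lhs => rw [hH.spectral_theorem, Unitary.conjStarAlgAut_apply]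
    rw [myCharpolyConj _ _ _ hU1 hU2, myCharpolyDiag]
    rfl
  -- roots
  have hroots : Lc.charpoly.roots
      = Multiset.map (fun i => ((eig i : ℝ) : ℂ)) Finset.univ.val := by
    rw [hcharp]
    have h2 := Polynomial.roots_multiset_prod_X_sub_C
      (Multiset.map (fun i => ((eig i : ℝ) : ℂ)) Finset.univ.val)
    rw [Multiset.map_map] at h2
    rw [← h2]
    rfl
  -- kernel and rank
  have hkerEq : LinearMap.ker (Matrix.mulVecLin Lc)
      = Submodule.span ℂ {(fun _ => (1:ℂ) : Fin n → ℂ)} := by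
    ext z
    constructor
    · intro hz
      rw [LinearMap.mem_ker, Matrix.mulVecLin_apply] at hz
      obtain ⟨c, hc⟩ := myKerConst tl hd hn hloop hconn w hw z hz
      rw [Submodule.mem_span_singleton]
      exact ⟨c, by rw [hc]; funext i; simp⟩
    · intro hz
      rw [Submodule.mem_span_singleton] at hz
      obtain ⟨a, ha⟩ := hz
      rw [LinearMap.mem_ker, ← ha, LinearMap.map_smul, Matrix.mulVecLin_apply,
        myOneC tl hd hloop w, smul_zero]
  have hone_ne : (fun _ => (1:ℂ) : Fin n → ℂ) ≠ 0 := by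
    intro h
    have := congrFun h ⟨0, by omega⟩
    simp at this
  have hrank : Lc.rank = n - 1 := by
    have h1 := LinearMap.finrank_range_add_finrank_ker (Matrix.mulVecLin Lc)
    rw [hkerEq, finrank_span_singleton hone_ne, Module.finrank_fin_fun] at h1
    have : Lc.rank = Module.finrank ℂ (LinearMap.range (Matrix.mulVecLin Lc)) := rfl
    omega
  -- multiplicity of the zero root
  have hcount : Multiset.count 0 Lc.charpoly.roots = 1 := by
    rw [hroots, Multiset.count_map]
    have hfil : Multiset.filter (fun i => (0:ℂ) = ((eig i : ℝ) : ℂ)) Finset.univ.val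
        = (Finset.univ.filter (fun i => eig i = 0)).val := by
      rw [Finset.filter_val]
      apply Multiset.filter_congr
      intro i _
      constructor
      · intro h
        exact_mod_cast h.symm
      · intro h
        rw [h]; simp
    rw [hfil]
    have hc1 : (Finset.univ.filter (fun i => eig i = 0)).card
        = Fintype.card {i // eig i = 0} := (Fintype.card_subtype _).symm
    have hc2 : Fintype.card {i // eig i ≠ 0} = n - 1 := by
      rw [← hH.rank_eq_card_non_zero_eigs]
      exact hrank
    have hc3 : Fintype.card {i // eig i ≠ 0}
        = Fintype.card (Fin n) - Fintype.card {i // eig i = 0} :=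
      Fintype.card_subtype_compl _
    have hc4 : Fintype.card {i // eig i = 0} ≤ Fintype.card (Fin n) :=
      Fintype.card_subtype_le _
    have hc5 : Fintype.card {i // eig i = 0} = 1 := by
      rw [Fintype.card_fin] at hc3 hc4
      omega
    show (Finset.univ.filter (fun i => eig i = 0)).val.card = 1
    rw [← Finset.card, hc1, hc5]
  -- conclusion
  intro z hre hQ0
  have hmono := Matrix.charpoly_monic Lc
  have hPne : Lc.charpoly ≠ 0 := hmono.ne_zero
  have hzero_root : (0:ℂ) ∈ Lc.charpoly.roots := by
    rw [← Multiset.count_pos, hcount]; omega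
  have hcoeff0 : Lc.charpoly.coeff 0 = 0 := by
    rw [Polynomial.coeff_zero_eq_eval_zero]
    exact Polynomial.isRoot_of_mem_roots hzero_root
  have hP : Lc.charpoly = Polynomial.X * (Lc.charpoly).divX := by
    conv_lhs => rw [← Polynomial.X_mul_divX_add Lc.charpoly]
    rw [hcoeff0, map_zero, add_zero]
  have hQne : (Lc.charpoly).divX ≠ 0 := by
    intro h
    rw [h, mul_zero] at hP
    exact hPne hP
  have hzQ : z ∈ ((Lc.charpoly).divX).roots :=
    (Polynomial.mem_roots hQne).mpr hQ0
  have hsplit : Lc.charpoly.roots = Polynomial.X.roots + ((Lc.charpoly).divX).roots := by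
    conv_lhs => rw [hP]
    exact Polynomial.roots_mul (hP ▸ hPne)
  have hzP : z ∈ Lc.charpoly.roots := by
    rw [hsplit, Multiset.mem_add]
    exact Or.inr hzQ
  -- z is a nonnegative real eigenvalue
  have hzP' : z ∈ Multiset.map (fun i => ((eig i : ℝ) : ℂ)) Finset.univ.val := by
    rw [← hroots]; exact hzP
  obtain ⟨i, -, hi⟩ := Multiset.mem_map.mp hzP'
  have hrez : z.re = eig i := by rw [← hi]; simp
  have heig0 : eig i = 0 := le_antisymm (by rw [← hrez]; exact hre) (hnn i)
  have hz0 : z = 0 := by rw [← hi, heig0]; simp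
  -- but then 0 has multiplicity at least 2
  have : Multiset.count (0:ℂ) Lc.charpoly.roots ≥ 2 := by
    rw [hsplit, Multiset.count_add, Polynomial.roots_X]
    have h1 : Multiset.count (0:ℂ) {0} = 1 := by simp
    have h2 : 1 ≤ Multiset.count (0:ℂ) ((Lc.charpoly).divX).roots := by
      rw [Multiset.one_le_count_iff_mem]
      rw [← hz0]
      exact hzQ
    omega
  omega

end Base

/-- For `L` the Laplacian of a connected graph with positive weights and
`Λ = M Bᵀ`, for all sufficiently small `|κ|` the matrix `L - κΛ` has a simple
zero eigenvalue with eigenvector `1ₙ` and all other eigenvalues with positive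
real part. -/
theorem stmt3 (n e : ℕ) (hn : 2 ≤ n) (tl hd : Fin e → Fin n) (hloop : ∀ k, tl k ≠ hd k)
    (hconn : Conn n e tl hd) (w : Fin e → ℝ) (hw : ∀ k, 0 < w k)
    (M : Matrix (Fin n) (Fin e) ℝ) :
    ∃ ε > (0:ℝ), ∀ κ : ℝ, |κ| < ε →
      (inc n e tl hd * Matrix.diagonal w * (inc n e tl hd)ᵀ - κ • (M * (inc n e tl hd)ᵀ)) *ᵥ
          (1 : Fin n → ℝ) = 0 ∧
      Polynomial.rootMultiplicity (0:ℂ)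
          (Matrix.charpoly ((inc n e tl hd * Matrix.diagonal w * (inc n e tl hd)ᵀ
            - κ • (M * (inc n e tl hd)ᵀ)).map Complex.ofReal)) = 1 ∧
      ∀ μ ∈ (Matrix.charpoly ((inc n e tl hd * Matrix.diagonal w * (inc n e tl hd)ᵀ
            - κ • (M * (inc n e tl hd)ᵀ)).map Complex.ofReal)).roots,
        μ ≠ 0 → 0 < μ.re := by
  classical
  set A : ℝ → Matrix (Fin n) (Fin n) ℂ := fun κ =>
    ((inc n e tl hd * Matrix.diagonal w * (inc n e tl hd)ᵀ
      - κ • (M * (inc n e tl hd)ᵀ)).map Complex.ofReal) with hA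
  -- real kernel vector
  have hB1 : (inc n e tl hd)ᵀ *ᵥ (1 : Fin n → ℝ) = 0 := by
    funext k
    rw [myIncRowR tl hd hloop _ k]
    simp
  have hreal : ∀ κ : ℝ, (inc n e tl hd * Matrix.diagonal w * (inc n e tl hd)ᵀ
      - κ • (M * (inc n e tl hd)ᵀ)) *ᵥ (1 : Fin n → ℝ) = 0 := by
    intro κ
    rw [Matrix.sub_mulVec, Matrix.smul_mulVec]
    have h1 : (inc n e tl hd * Matrix.diagonal w * (inc n e tl hd)ᵀ) *ᵥ (1 : Fin n → ℝ) = 0 := by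
      rw [← Matrix.mulVec_mulVec, hB1, Matrix.mulVec_zero]
    have h2 : (M * (inc n e tl hd)ᵀ) *ᵥ (1 : Fin n → ℝ) = 0 := by
      rw [← Matrix.mulVec_mulVec, hB1, Matrix.mulVec_zero]
    rw [h1, h2, smul_zero, sub_zero]
  -- complex kernel vector and zero constant coefficient
  have hcplx : ∀ κ : ℝ, A κ *ᵥ (fun _ => (1:ℂ)) = 0 := by
    intro κ
    funext i
    have h := congrFun (hreal κ) i
    simp only [Matrix.mulVec, dotProduct, Pi.one_apply, Pi.zero_apply, mul_one] at h ⊢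
    rw [hA]
    simp only [Matrix.map_apply]
    exact_mod_cast h
  have honec : (fun _ => (1:ℂ) : Fin n → ℂ) ≠ 0 := by
    intro h
    have := congrFun h ⟨0, by omega⟩
    simp at this
  have hdet : ∀ κ : ℝ, (A κ).det = 0 := fun κ =>
    (Matrix.exists_mulVec_eq_zero_iff).mp ⟨fun _ => 1, honec, hcplx κ⟩
  have hcoeff0 : ∀ κ : ℝ, ((A κ).charpoly).coeff 0 = 0 := by
    intro κ
    have h := Matrix.det_eq_sign_charpoly_coeff (A κ)
    rw [hdet κ] at h
    rcases mul_eq_zero.mp h.symm with h' | h'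
    · exact absurd h' (pow_ne_zero _ (by norm_num))
    · exact h'
  -- continuity of the coefficients
  have hA_cont : ∀ i j, Continuous fun κ => A κ i j := by
    intro i j
    rw [hA]
    simp only [Matrix.map_apply, Matrix.sub_apply, Matrix.smul_apply, smul_eq_mul]
    exact Complex.continuous_ofReal.comp (by fun_prop)
  have hc : ∀ i : ℕ, Continuous fun κ => ((A κ).charpoly).coeff i := myContCoeff A hA_cont
  -- facts about the characteristic polynomial and its divX
  have hmon : ∀ κ, ((A κ).charpoly).Monic := fun κ => Matrix.charpoly_monic _
  have hdegP : ∀ κ, ((A κ).charpoly).natDegree = n := fun κ => by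
    rw [Matrix.charpoly_natDegree_eq_dim, Fintype.card_fin]
  have hQdeg : ∀ κ, (((A κ).charpoly).divX).natDegree = n - 1 := fun κ => by
    rw [Polynomial.natDegree_divX_eq_natDegree_tsub_one, hdegP]
  have hQcoeff : ∀ (κ : ℝ) (i : ℕ), (((A κ).charpoly).divX).coeff i = ((A κ).charpoly).coeff (i+1) :=
    fun κ i => Polynomial.coeff_divX
  have hQmonic : ∀ κ, (((A κ).charpoly).divX).Monic := by
    intro κ
    rw [Polynomial.Monic, Polynomial.leadingCoeff, hQdeg, hQcoeff]
    have : n - 1 + 1 = n := by omega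
    rw [this]
    have h2 := hmon κ
    rw [Polynomial.Monic, Polynomial.leadingCoeff, hdegP] at h2
    exact h2
  have hQeval : ∀ (κ : ℝ) (z : ℂ), (((A κ).charpoly).divX).eval z
      = ∑ i ∈ Finset.range n, ((A κ).charpoly).coeff (i+1) * z^i := by
    intro κ z
    rw [Polynomial.eval_eq_sum_range' (n := n) (by rw [hQdeg]; omega) z]
    exact Finset.sum_congr rfl fun i _ => by rw [hQcoeff]
  -- the continuous evaluation function
  set F : ℝ × ℂ → ℂ := fun p => ∑ i ∈ Finset.range n, ((A p.1).charpoly).coeff (i+1) * p.2^i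
    with hFdef
  have hF : Continuous F := by
    refine continuous_finset_sum _ fun i _ => ?_
    exact ((hc (i+1)).comp continuous_fst).mul (continuous_snd.pow i)
  -- uniform bound on coefficients over [-1,1]
  obtain ⟨C, hC⟩ : ∃ C : ℝ, ∀ κ ∈ Set.Icc (-1:ℝ) 1,
      (∑ i ∈ Finset.range n, ‖((A κ).charpoly).coeff (i+1)‖) ≤ C := by
    obtain ⟨C, hC⟩ := (isCompact_Icc (a := (-1:ℝ)) (b := 1)).exists_bound_of_continuousOn
      (f := fun κ => (∑ i ∈ Finset.range n, ‖((A κ).charpoly).coeff (i+1)‖ : ℝ))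
      (by exact Continuous.continuousOn (by
        refine continuous_finset_sum _ fun i _ => ?_
        exact (hc (i+1)).norm))
    exact ⟨C, fun κ hκ => (le_abs_self _).trans ((Real.norm_eq_abs _ ▸ hC κ hκ))⟩
  set R := max 1 C with hR
  set K : Set ℂ := {z | z.re ≤ 0 ∧ ‖z‖ ≤ R} with hK
  have hKcomp : IsCompact K := by
    have hcl : IsClosed K := by
      refine IsClosed.inter ?_ ?_
      · exact isClosed_le (Complex.continuous_re) continuous_const
      · exact isClosed_le continuous_norm continuous_const
    refine (isCompact_closedBall (0:ℂ) R).of_isClosed_subset hcl ?_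
    intro z hz
    rw [Metric.mem_closedBall, dist_zero_right]
    exact hz.2
  -- base case: F(0, ·) has no zero on K
  have hA0 : A 0 = ((inc n e tl hd * Matrix.diagonal w * (inc n e tl hd)ᵀ).map Complex.ofReal) := by
    rw [hA]
    norm_num
  have hF0 : ∀ z ∈ K, F (0, z) ≠ 0 := by
    intro z hz
    have : F (0, z) = (((A 0).charpoly).divX).eval z := (hQeval 0 z).symm
    rw [this, hA0]
    exact myBase tl hd hn hloop hconn w hw z hz.1
  -- tube lemma
  have hopen : IsOpen {p : ℝ × ℂ | F p ≠ 0} := by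
    have : {p : ℝ × ℂ | F p ≠ 0} = F ⁻¹' ({0}ᶜ) := rfl
    rw [this]
    exact IsOpen.preimage hF (isOpen_compl_singleton)
  have hsub : ({0} : Set ℝ) ×ˢ K ⊆ {p : ℝ × ℂ | F p ≠ 0} := by
    rintro ⟨κ, z⟩ ⟨hκ, hzK⟩
    rcases hκ with rfl
    exact hF0 z hzK
  obtain ⟨U, V, hUo, hVo, h0U, hKV, hUV⟩ :=
    generalized_tube_lemma isCompact_singleton hKcomp hopen hsub
  obtain ⟨ε0, hε0, hball⟩ := Metric.isOpen_iff.mp hUo 0 (h0U rfl)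
  refine ⟨min ε0 1, by positivity, ?_⟩
  intro κ hκ
  have hκε : |κ| < ε0 := lt_of_lt_of_le hκ (min_le_left _ _)
  have hκ1 : κ ∈ Set.Icc (-1:ℝ) 1 := by
    have : |κ| ≤ 1 := le_of_lt (lt_of_lt_of_le hκ (min_le_right _ _))
    exact abs_le.mp this |>.imp id id |> fun h => ⟨h.1, h.2⟩
  have hκU : κ ∈ U := hball (by simpa [Real.dist_eq] using hκε)
  have hFκ : ∀ z ∈ K, F (κ, z) ≠ 0 := fun z hz => hUV ⟨hκU, hKV hz⟩
  -- all roots of divX have positive real part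
  have hQz : ∀ z : ℂ, (((A κ).charpoly).divX).eval z = 0 → 0 < z.re := by
    intro z hz0
    by_contra hle
    push_neg at hle
    have hbound : ‖z‖ ≤ R := by
      have h1 := myRootBound (((A κ).charpoly).divX) (hQmonic κ) hz0
      refine le_trans h1 (max_le (le_max_left _ _) ?_)
      have h2 : (∑ i ∈ Finset.range ((((A κ).charpoly).divX).natDegree),
          ‖(((A κ).charpoly).divX).coeff i‖)
          ≤ ∑ i ∈ Finset.range n, ‖((A κ).charpoly).coeff (i+1)‖ := by
        rw [hQdeg]
        refine Finset.sum_le_sum_of_subset_of_nonneg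
          (Finset.range_subset_range.mpr (Nat.sub_le n 1)) (fun i _ _ => norm_nonneg _) |>.trans ?_
        refine le_of_eq (Finset.sum_congr rfl fun i _ => ?_)
        rw [hQcoeff]
      exact le_trans h2 ((hC κ hκ1).trans (le_max_right 1 C))
    have : F (κ, z) = 0 := by
      rw [hFdef]
      simp only
      rw [← hQeval]
      exact hz0
    exact hFκ z ⟨hle, hbound⟩ this
  -- factor out X
  have hPfact : (A κ).charpoly = Polynomial.X * ((A κ).charpoly).divX := by
    conv_lhs => rw [← Polynomial.X_mul_divX_add ((A κ).charpoly)]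
    rw [hcoeff0 κ, map_zero, add_zero]
  have hPne : (A κ).charpoly ≠ 0 := (hmon κ).ne_zero
  have hQne : ((A κ).charpoly).divX ≠ 0 := by
    intro h
    rw [h, mul_zero] at hPfact
    exact hPne hPfact
  have hQ0ne : (((A κ).charpoly).divX).eval 0 ≠ 0 := by
    intro h
    have := hQz 0 h
    simp at this
  refine ⟨hreal κ, ?_, ?_⟩
  · show Polynomial.rootMultiplicity (0:ℂ) ((A κ).charpoly) = 1
    rw [hPfact, Polynomial.rootMultiplicity_mul (by rw [← hPfact]; exact hPne)]
    have h1 : Polynomial.rootMultiplicity (0:ℂ) Polynomial.X = 1 := by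
      have := Polynomial.rootMultiplicity_X_sub_C_self (x := (0:ℂ))
      simpa using this
    have h2 : Polynomial.rootMultiplicity (0:ℂ) (((A κ).charpoly).divX) = 0 :=
      Polynomial.rootMultiplicity_eq_zero hQ0ne
    rw [h1, h2]
  · show ∀ μ ∈ ((A κ).charpoly).roots, μ ≠ 0 → 0 < μ.re
    intro μ hμ hμ0
    have hsplit : ((A κ).charpoly).roots
        = Polynomial.X.roots + (((A κ).charpoly).divX).roots := by
      conv_lhs => rw [hPfact]
      exact Polynomial.roots_mul (by rw [← hPfact]; exact hPne)
    rw [hsplit, Multiset.mem_add, Polynomial.roots_X, Multiset.mem_singleton] at hμ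
    rcases hμ with hμ | hμ
    · exact absurd hμ hμ0
    · exact hQz μ ((Polynomial.mem_roots hQne).mp hμ)
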